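/- arXiv:2203.14543 — 3 statements merged into one kernel-verified Lean document; each statement's English description precedes it below -/
import Mathlib

section
/- Let L be a free abelian group of finite rank and B: L × L → ℤ a symmetric positive definite bilinear form. Define χ: L × (L_ℝ ⊕ ℝ) → ℝ by χ(l, (n, s)) = s·a(l) + ⟨B(l,·), n⟩ where a(l) satisfies a(l+l') - a(l) - a(l') = B(l,l') and a(0) = 0. Then the function φ(ñ) = min_{l∈L} χ(l, ñ) is well-defined (the minimum is attained) on the cone 𝒞 = (L_ℝ × ℝ_{>0}) ∪ {0}. -/
section Aux

variable {L : Type*} [AddCommGroup L] {ι : Type*} [Fintype ι]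

lemma expand_left (B : L →+ L →+ ℤ) (b : Module.Basis ι ℤ L) (u w : L) :
    B u w = ∑ i, b.repr u i * B (b i) w := by
  conv_lhs => rw [← b.sum_repr u]
  simp [map_sum, map_zsmul, AddMonoidHom.finset_sum_apply, AddMonoidHom.smul_apply, smul_eq_mul, -Module.Basis.sum_repr]

/-- Cauchy–Schwarz for a nonneg symmetric integer bilinear form, when `B u u > 0`. -/
lemma cs_int (B : L →+ L →+ ℤ) (hsymm : ∀ l l' : L, B l l' = B l' l)
    (hnn : ∀ l : L, 0 ≤ B l l) (u v : L) (hu : 0 < B u u) :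
    (B u v) ^ 2 ≤ B u u * B v v := by
  have h := hnn ((B u u) • v - (B u v) • u)
  simp only [map_sub, map_zsmul, AddMonoidHom.sub_apply, AddMonoidHom.smul_apply,
    smul_eq_mul] at h
  rw [hsymm v u] at h
  have h2 : 0 ≤ (B u u) * ((B u u) * (B v v) - (B u v) ^ 2) := by nlinarith [h]
  nlinarith [h2, hu]

lemma inj_emb (B : L →+ L →+ ℤ) (hsymm : ∀ l l' : L, B l l' = B l' l)
    (hpos : ∀ l : L, l ≠ 0 → 0 < B l l) (b : Module.Basis ι ℤ L) :
    Function.Injective (fun l : L => fun i => B (b i) l) := by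
  intro x y h
  by_contra hne
  have hxy : x - y ≠ 0 := sub_ne_zero.mpr hne
  have h0 : ∀ i, B (b i) (x - y) = 0 := by
    intro i
    rw [map_sub, sub_eq_zero]
    exact congrFun h i
  have hB0 : B (x - y) (x - y) = 0 := by
    rw [expand_left B b]
    exact Finset.sum_eq_zero fun i _ => by rw [h0 i, mul_zero]
  exact absurd hB0 (hpos _ hxy).ne'

lemma finite_sub (B : L →+ L →+ ℤ) (hsymm : ∀ l l' : L, B l l' = B l' l)
    (hpos : ∀ l : L, l ≠ 0 → 0 < B l l) (b : Module.Basis ι ℤ L) (R : ℤ) :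
    {l : L | B l l ≤ R}.Finite := by
  have hnn : ∀ l : L, 0 ≤ B l l := by
    intro l
    rcases eq_or_ne l 0 with rfl | h
    · simp
    · exact (hpos l h).le
  set M : ι → ℤ := fun i => B (b i) (b i) * R with hM
  have hsub : {l : L | B l l ≤ R} ⊆
      (fun l : L => fun i => B (b i) l) ⁻¹' (Set.univ.pi fun i => Set.Icc (-(M i)) (M i)) := by
    intro l hl i _
    have hbi : 0 < B (b i) (b i) := hpos _ (b.ne_zero i)
    have hcs := cs_int B hsymm hnn (b i) l hbi
    have h1 : (B (b i) l) ^ 2 ≤ M i :=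
      hcs.trans (mul_le_mul_of_nonneg_left hl hbi.le)
    have h2 : |B (b i) l| ≤ M i :=
      le_trans (by nlinarith [abs_nonneg (B (b i) l), sq_abs (B (b i) l)]) h1
    simp only [Set.mem_Icc]
    constructor
    · linarith [neg_abs_le (B (b i) l)]
    · linarith [le_abs_self (B (b i) l)]
  refine Set.Finite.subset (Set.Finite.preimage ((inj_emb B hsymm hpos b).injOn) ?_) hsub
  exact Set.Finite.pi fun i => Set.finite_Icc _ _

lemma det_ne [DecidableEq ι] (B : L →+ L →+ ℤ) (hsymm : ∀ l l' : L, B l l' = B l' l)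
    (hpos : ∀ l : L, l ≠ 0 → 0 < B l l) (b : Module.Basis ι ℤ L) :
    (Matrix.of fun i j => B (b i) (b j)).det ≠ 0 := by
  set Q : Matrix ι ι ℤ := Matrix.of fun i j => B (b i) (b j) with hQ
  intro hdet
  have hdetQ : (Q.map (Int.cast : ℤ → ℚ)).det = 0 := by
    have := RingHom.map_det (Int.castRingHom ℚ) Q
    rw [hdet] at this
    simpa using this.symm
  obtain ⟨v, hv0, hv⟩ := Matrix.exists_mulVec_eq_zero_iff.mpr hdetQ
  set d : ℤ := ∏ i, ((v i).den : ℤ) with hd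
  have hdpos : (0 : ℤ) < d := Finset.prod_pos fun i _ => Int.natCast_pos.mpr (v i).pos
  have hint : ∀ i, ∃ z : ℤ, (z : ℚ) = (d : ℚ) * v i := by
    intro i
    have hdvd : ((v i).den : ℤ) ∣ d := Finset.dvd_prod_of_mem _ (Finset.mem_univ i)
    obtain ⟨e, he⟩ := hdvd
    refine ⟨(v i).num * e, ?_⟩
    have hvden : ((v i).den : ℚ) ≠ 0 := Nat.cast_ne_zero.mpr (v i).den_nz
    have h1 : v i * ((v i).den : ℚ) = (v i).num := Rat.mul_den_eq_num (v i)
    push_cast [he]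
    linear_combination (-(e : ℚ)) * h1
  choose w hw using hint
  have hQw : Q.mulVec w = 0 := by
    funext j
    have hj := congrFun hv j
    have key : ((Q.mulVec w j : ℤ) : ℚ) = (d : ℚ) * ((Q.map (Int.cast : ℤ → ℚ)).mulVec v j) := by
      simp only [Matrix.mulVec, dotProduct, Matrix.map_apply, Finset.mul_sum]
      push_cast
      refine Finset.sum_congr rfl fun i _ => ?_
      rw [hw i]; ring
    rw [hj] at key
    simpa using key
  have hw0 : w ≠ 0 := by
    obtain ⟨i, hi⟩ := Function.ne_iff.mp hv0
    intro h
    apply hi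
    have h2 : ((w i : ℤ) : ℚ) = (d : ℚ) * v i := hw i
    rw [h] at h2
    simp only [Pi.zero_apply, Int.cast_zero] at h2
    have hdne : (d : ℚ) ≠ 0 := by exact_mod_cast hdpos.ne'
    rcases mul_eq_zero.mp h2.symm with hcase | hcase
    · exact absurd hcase hdne
    · exact hcase
  set l : L := ∑ i, w i • b i with hl
  have hreprl : ⇑(b.repr l) = w := by rw [hl]; exact b.repr_sum_self w
  have hl0 : l ≠ 0 := by
    intro h
    apply hw0
    rw [h] at hreprl
    simpa using hreprl.symm
  have hBll : B l l = 0 := by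
    rw [expand_left B b, hreprl]
    refine Finset.sum_eq_zero fun i _ => ?_
    have h2 : B (b i) l = Q.mulVec w i := by
      conv_lhs => rw [hl]
      simp only [map_sum, map_zsmul, smul_eq_mul, Matrix.mulVec, dotProduct, hQ,
        Matrix.of_apply]
      exact Finset.sum_congr rfl fun j _ => mul_comm _ _
    rw [h2, hQw]
    simp
  exact absurd hBll (hpos l hl0).ne'

end Aux


/-- For a finite-rank free abelian group `L` with symmetric positive definite
`B : L × L → ℤ` and `a : L → ℤ` with `a 0 = 0`, `a(l+l') - a(l) - a(l') = B(l,l')`, the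
function `φ(ñ) = min_{l∈L} χ(l, ñ)`, with `χ(l,(n,s)) = s·a(l) + n(l)` (identifying points
of `L_ℝ` with functionals on `L` via `B`), is well-defined on the cone
`𝒞 = (L_ℝ × ℝ_{>0}) ∪ {0}`: the minimum is attained. -/
theorem stmt_4 (L : Type*) [AddCommGroup L] [Module.Free ℤ L] [Module.Finite ℤ L]
    (B : L →+ L →+ ℤ) (hsymm : ∀ l l' : L, B l l' = B l' l)
    (hpos : ∀ l : L, l ≠ 0 → 0 < B l l)
    (a : L → ℤ) (ha0 : a 0 = 0)
    (hcoc : ∀ l l' : L, a (l + l') - a l - a l' = B l l')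
    (χ : L → ((L →+ ℝ) × ℝ) → ℝ)
    (hχ : ∀ (l : L) (p : (L →+ ℝ) × ℝ), χ l p = p.2 * a l + p.1 l)
    (C : Set ((L →+ ℝ) × ℝ)) (hC : C = {p | 0 < p.2 ∨ p = 0}) :
    ∀ p ∈ C, ∃ l₀ : L, ∀ l : L, χ l₀ p ≤ χ l p := by
  classical
  intro p hp
  rw [hC] at hp
  rcases hp with hs | hp0
  swap
  · exact ⟨0, fun l => by simp [hχ, hp0]⟩
  have hnn : ∀ l : L, 0 ≤ B l l := by
    intro l
    rcases eq_or_ne l 0 with rfl | h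
    · simp
    · exact (hpos l h).le
  set ι := Module.Free.ChooseBasisIndex ℤ L with hι
  set b : Module.Basis ι ℤ L := Module.Free.chooseBasis ℤ L with hb
  set Q : Matrix ι ι ℤ := Matrix.of fun i j => B (b i) (b j) with hQ
  have hdet : Q.det ≠ 0 := det_ne B hsymm hpos b
  set QR : Matrix ι ι ℝ := Q.map (Int.cast : ℤ → ℝ) with hQR
  have hdetR : QR.det ≠ 0 := by
    have h : ((Q.det : ℤ) : ℝ) = QR.det := by
      simpa [hQR] using RingHom.map_det (Int.castRingHom ℝ) Q
    intro hc
    rw [← h] at hc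
    exact hdet (by exact_mod_cast hc)
  have hQunit : IsUnit QR.det := isUnit_iff_ne_zero.mpr hdetR
  -- the additive part G
  have hGadd : ∀ x y : L, (χ (x + y) p - p.2 / 2 * (B (x + y) (x + y) : ℝ)) =
      (χ x p - p.2 / 2 * (B x x : ℝ)) + (χ y p - p.2 / 2 * (B y y : ℝ)) := by
    intro x y
    have h1 : (a (x + y) : ℝ) = (a x : ℝ) + (a y : ℝ) + (B x y : ℝ) := by
      exact_mod_cast congrArg (Int.cast : ℤ → ℝ) (by linarith [hcoc x y] : a (x + y) = a x + a y + B x y)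
    have h2 : ((B (x + y)) (x + y) : ℝ) = (B x x : ℝ) + 2 * (B x y : ℝ) + (B y y : ℝ) := by
      have h3 : B (x + y) (x + y) = B x x + B x y + (B y x + B y y) := by
        simp only [map_add, AddMonoidHom.add_apply]
        ring
      rw [h3, hsymm y x]
      push_cast
      ring
    rw [hχ, hχ, hχ, show p.1 (x + y) = p.1 x + p.1 y from map_add _ _ _]
    linear_combination p.2 * h1 - p.2 / 2 * h2
  set G : L →+ ℝ := AddMonoidHom.mk' (fun l => χ l p - p.2 / 2 * (B l l : ℝ)) hGadd with hG
  have hGdef : ∀ l : L, χ l p = p.2 / 2 * (B l l : ℝ) + G l := by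
    intro l
    simp only [hG, AddMonoidHom.mk'_apply]
    ring
  set g : ι → ℝ := fun i => G (b i) with hg
  set y : ι → ℝ := QR⁻¹.mulVec g with hy
  have hmv : QR.mulVec y = g := by
    rw [hy, Matrix.mulVec_mulVec, Matrix.mul_nonsing_inv _ hQunit, Matrix.one_mulVec]
  have hGrep : ∀ l : L, (G l : ℝ) = ∑ i, y i * (B (b i) l : ℝ) := by
    intro l
    have hL : G l = ∑ j, ((b.repr l j : ℤ) : ℝ) * g j := by
      conv_lhs => rw [← b.sum_repr l]
      simp [map_sum, map_zsmul, zsmul_eq_mul, hg, -Module.Basis.sum_repr]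
    have hBi : ∀ i, ((B (b i) l : ℤ) : ℝ) = ∑ j, ((b.repr l j : ℤ) : ℝ) * ((Q i j : ℤ) : ℝ) := by
      intro i
      rw [hsymm (b i) l, expand_left B b l (b i)]
      push_cast
      refine Finset.sum_congr rfl fun j _ => ?_
      rw [hsymm (b j) (b i)]
      rfl
    have hkey : ∑ i, y i * ((B (b i) l : ℤ) : ℝ) = ∑ j, ((b.repr l j : ℤ) : ℝ) * (QR.mulVec y j) := by
      simp only [hBi, Finset.mul_sum, Matrix.mulVec, dotProduct, hQR, Matrix.map_apply]
      rw [Finset.sum_comm]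
      refine Finset.sum_congr rfl fun j _ => Finset.sum_congr rfl fun i _ => ?_
      have hq : Q i j = Q j i := hsymm (b i) (b j)
      rw [hq]
      ring
    rw [hL, hkey, hmv]
  set C0 : ℝ := ∑ i, |y i| * Real.sqrt ((Q i i : ℝ)) with hC0def
  have hC0 : 0 ≤ C0 :=
    Finset.sum_nonneg fun i _ => mul_nonneg (abs_nonneg _) (Real.sqrt_nonneg _)
  have hGbound : ∀ l : L, |G l| ≤ C0 * Real.sqrt ((B l l : ℝ)) := by
    intro l
    rw [hGrep l, hC0def, Finset.sum_mul]
    refine (Finset.abs_sum_le_sum_abs _ _).trans (Finset.sum_le_sum fun i _ => ?_)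
    rw [abs_mul, mul_assoc]
    refine mul_le_mul_of_nonneg_left ?_ (abs_nonneg _)
    have hcs : ((B (b i) l) ^ 2 : ℤ) ≤ Q i i * B l l :=
      cs_int B hsymm hnn (b i) l (hpos _ (b.ne_zero i))
    have h1 : |((B (b i) l : ℤ) : ℝ)| ≤ Real.sqrt (((Q i i : ℤ) : ℝ) * ((B l l : ℤ) : ℝ)) := by
      rw [← Real.sqrt_sq_eq_abs]
      apply Real.sqrt_le_sqrt
      push_cast
      exact_mod_cast hcs
    calc |((B (b i) l : ℤ) : ℝ)| ≤ Real.sqrt (((Q i i : ℤ) : ℝ) * ((B l l : ℤ) : ℝ)) := h1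
      _ = Real.sqrt ((Q i i : ℤ) : ℝ) * Real.sqrt ((B l l : ℤ) : ℝ) :=
        Real.sqrt_mul (by exact_mod_cast hnn (b i)) _
  set R : ℤ := max ⌈(2 * C0 / p.2) ^ 2⌉ 0 with hR
  have hfin : {l : L | B l l ≤ R}.Finite := finite_sub B hsymm hpos b R
  have h0S : (0 : L) ∈ {l : L | B l l ≤ R} := by
    simp only [Set.mem_setOf_eq, map_zero, AddMonoidHom.zero_apply]
    exact le_max_right _ _
  obtain ⟨l₀, hl₀, hmin⟩ := Set.exists_min_image _ (fun l => χ l p) hfin ⟨0, h0S⟩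
  refine ⟨l₀, fun l => ?_⟩
  by_cases hl : l ∈ {l : L | B l l ≤ R}
  · exact hmin l hl
  · have hlR : (R : ℝ) < ((B l l : ℤ) : ℝ) := by exact_mod_cast not_le.mp hl
    have hχ0 : χ (0 : L) p = 0 := by simp [hχ, ha0]
    have hle0 : χ l₀ p ≤ 0 := hχ0 ▸ hmin 0 h0S
    refine hle0.trans ?_
    set t : ℝ := Real.sqrt ((B l l : ℤ) : ℝ) with ht
    have htnn : 0 ≤ t := Real.sqrt_nonneg _
    have ht2 : t ^ 2 = ((B l l : ℤ) : ℝ) := Real.sq_sqrt (by exact_mod_cast hnn l)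
    have hRge : ((2 * C0 / p.2) ^ 2 : ℝ) ≤ (R : ℝ) := by
      calc ((2 * C0 / p.2) ^ 2 : ℝ) ≤ (⌈(2 * C0 / p.2) ^ 2⌉ : ℝ) := Int.le_ceil _
        _ ≤ (R : ℝ) := by exact_mod_cast le_max_left _ _
    have htgt : 2 * C0 / p.2 < t := by
      by_contra hcon
      push_neg at hcon
      have h1 : t ^ 2 ≤ (2 * C0 / p.2) ^ 2 :=
        pow_le_pow_left₀ htnn hcon 2
      rw [ht2] at h1
      linarith
    have hst : 2 * C0 < p.2 * t := by
      rw [div_lt_iff₀ hs] at htgt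
      linarith
    have hGl : -(C0 * t) ≤ G l := neg_le_of_abs_le (by rw [← ht] at *; exact (hGbound l))
    rw [hGdef l, ← ht2]
    nlinarith [mul_nonneg htnn (by linarith : (0:ℝ) ≤ p.2 * t - 2 * C0), hGl, htnn]
end

section
/- Let L be a rank-2 lattice in ℝ². The action of Γ = L ⋊ {±1} on ℝ² ∖ ½L (by (l,ε)·x = εx + l) is free and properly discontinuous; consequently the quotient map ℝ² ∖ ½L → (ℝ² ∖ ½L)/Γ is a covering map. -/
open Set Topology

section Aux
variable {E' : Type*} [TopologicalSpace E'] {ι : Type*}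

theorem aux_covering (M : ι → E' → E')
    (hcont : ∀ i, Continuous (M i))
    (hcomp : ∀ i j, ∃ k, ∀ y, M i (M j y) = M k y)
    (hinv : ∀ i, ∃ j, (∀ y, M i (M j y) = y) ∧ (∀ y, M j (M i y) = y))
    (hid : ∃ i₀, ∀ y, M i₀ y = y)
    (hdisc : ∀ x : E', ∃ U : Set E', IsOpen U ∧ x ∈ U ∧
       ∀ i, ∀ u ∈ U, M i u ∈ U → ∀ y, M i y = y) :
    IsCoveringMap (Quot.mk (fun p q : E' => ∃ i, q = M i p)) := by
  set R : E' → E' → Prop := fun p q => ∃ i, q = M i p with hR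
  have hequiv : Equivalence R := by
    constructor
    · intro x; obtain ⟨i₀, h⟩ := hid; exact ⟨i₀, (h x).symm⟩
    · rintro x y ⟨i, rfl⟩; obtain ⟨j, hj1, hj2⟩ := hinv i; exact ⟨j, (hj2 x).symm⟩
    · rintro x y z ⟨i, rfl⟩ ⟨j, rfl⟩
      obtain ⟨k, hk⟩ := hcomp j i; exact ⟨k, (hk x)⟩
  set f : E' → Quot R := Quot.mk R with hf
  have key : ∀ p q, f p = f q ↔ R p q := fun p q =>
    ⟨fun h => (hequiv.eqvGen_iff).mp (Quot.eqvGen_exact h), fun h => Quot.sound h⟩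
  have fcont : Continuous f := continuous_quot_mk
  have fopen : IsOpenMap f := by
    intro W hW
    rw [isOpen_coinduced]
    have : f ⁻¹' (f '' W) = ⋃ i, (M i) ⁻¹' W := by
      ext y
      simp only [mem_preimage, mem_image, mem_iUnion]
      constructor
      · rintro ⟨w, hwW, hw⟩
        obtain ⟨i, rfl⟩ := (key w y).mp hw
        obtain ⟨j, hj1, hj2⟩ := hinv i
        exact ⟨j, by rwa [hj2]⟩
      · rintro ⟨i, hi⟩
        obtain ⟨j, hj1, hj2⟩ := hinv i
        exact ⟨M i y, hi, (key (M i y) y).mpr ⟨j, (hj2 y).symm⟩⟩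
    rw [this]
    exact isOpen_iUnion fun i => (hcont i).isOpen_preimage W hW
  intro q
  induction q using Quot.ind with
  | _ x₀ =>
  obtain ⟨U, hUo, hx₀U, hU⟩ := hdisc x₀
  -- maps agreeing somewhere on U agree everywhere
  have hsame : ∀ i i' u u', u ∈ U → u' ∈ U → M i u = M i' u' → ∀ y, M i y = M i' y := by
    intro i i' u u' hu hu' heq y
    obtain ⟨j, hj1, hj2⟩ := hinv i
    obtain ⟨k, hk⟩ := hcomp j i'
    have hku' : M k u' = u := by rw [← hk, ← heq, hj2]
    have hkid : ∀ z, M k z = z := hU k u' hu' (by rwa [hku'])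
    have : M j (M i' y) = y := by rw [hk, hkid]
    calc M i y = M i (M j (M i' y)) := by rw [this]
    _ = M i' y := hj1 _
  have hinj : ∀ i i' u u', u ∈ U → u' ∈ U → M i u = M i' u' → u = u' := by
    intro i i' u u' hu hu' heq
    obtain ⟨j, hj1, hj2⟩ := hinv i
    have h2 := hsame i i' u u' hu hu' heq
    have : M i u = M i u' := by rw [heq, h2]
    calc u = M j (M i u) := (hj2 u).symm
    _ = M j (M i u') := by rw [this]
    _ = u' := hj2 u'
  set q₀ : Quot R := f x₀ with hq₀
  set F : Set E' := f ⁻¹' {q₀} with hFdef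
  -- every fiber element has the form M i x₀
  have hFform : ∀ z : E', z ∈ F → ∃ i, z = M i x₀ := by
    intro z hz
    have : f x₀ = f z := by
      simpa [hFdef, mem_preimage, mem_singleton_iff] using hz.symm
    exact (key x₀ z).mp this
  have hMmemF : ∀ i, M i x₀ ∈ F := by
    intro i
    simp only [hFdef, mem_preimage, mem_singleton_iff]
    exact ((key x₀ (M i x₀)).mpr ⟨i, rfl⟩).symm
  -- discreteness of the fiber
  have hFdisc : DiscreteTopology F := by
    rw [discreteTopology_iff_isOpen_singleton]
    rintro ⟨z, hz⟩
    obtain ⟨i, rfl⟩ := hFform z hz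
    obtain ⟨j, hj1, hj2⟩ := hinv i
    rw [isOpen_induced_iff]
    refine ⟨(M j) ⁻¹' U, (hcont j).isOpen_preimage U hUo, ?_⟩
    ext ⟨z', hz'⟩
    simp only [mem_preimage, mem_singleton_iff, Subtype.ext_iff]
    constructor
    · intro hmem
      obtain ⟨i', rfl⟩ := hFform z' hz'
      obtain ⟨k, hk⟩ := hcomp j i'
      have : M k x₀ ∈ U := by rw [← hk]; exact hmem
      have hkid := hU k x₀ hx₀U this
      have : M j (M i' x₀) = x₀ := by rw [hk, hkid]
      calc M i' x₀ = M i (M j (M i' x₀)) := (hj1 _).symm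
      _ = M i x₀ := by rw [this]
    · rintro rfl
      rw [hj2]; exact hx₀U
  set V : Set (Quot R) := f '' U with hV
  have hVo : IsOpen V := fopen U hUo
  -- the coordinate function
  classical
  set c : E' → F := fun y =>
    if h : ∃ i, ∃ u ∈ U, y = M i u then ⟨M h.choose x₀, hMmemF _⟩
    else ⟨x₀, by simp [hFdef, hq₀]⟩ with hc
  have hcspec : ∀ y i u, u ∈ U → y = M i u → (c y : E') = M i x₀ := by
    intro y i u hu hy
    have h : ∃ i, ∃ u ∈ U, y = M i u := ⟨i, u, hu, hy⟩
    simp only [hc, dif_pos h]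
    obtain ⟨u', hu', hy'⟩ := h.choose_spec
    exact hsame _ i u' u hu' hu (by rw [← hy', ← hy]) x₀
  -- membership in source
  have hsrc : ∀ y : E', f y ∈ V ↔ ∃ i, ∃ u ∈ U, y = M i u := by
    intro y
    simp only [hV, mem_image]
    constructor
    · rintro ⟨u, hu, huy⟩
      obtain ⟨i, rfl⟩ := (key u y).mp huy
      exact ⟨i, u, hu, rfl⟩
    · rintro ⟨i, u, hu, rfl⟩
      exact ⟨u, hu, (key u (M i u)).mpr ⟨i, rfl⟩⟩
  -- the section
  set g : Quot R → E' := fun q => if h : ∃ u ∈ U, f u = q then h.choose else x₀ with hg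
  have hgspec : ∀ q, q ∈ V → g q ∈ U ∧ f (g q) = q := by
    rintro q ⟨u, hu, rfl⟩
    have h : ∃ u' ∈ U, f u' = f u := ⟨u, hu, rfl⟩
    simp only [hg, dif_pos h]
    exact h.choose_spec
  have hgval : ∀ u ∈ U, g (f u) = u := by
    intro u hu
    obtain ⟨h1, h2⟩ := hgspec (f u) ⟨u, hu, rfl⟩
    obtain ⟨i, hgi⟩ := (key u (g (f u))).mp h2.symm
    rw [hgi]
    exact hU i u hu (by rw [← hgi]; exact h1) u
  have hgcont : ContinuousOn g V := by
    intro q hq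
    rw [ContinuousWithinAt, tendsto_nhds]
    intro W hWo hgW
    have hT : IsOpen (f '' (U ∩ W)) := fopen _ (hUo.inter hWo)
    have hqT : q ∈ f '' (U ∩ W) := by
      obtain ⟨h1, h2⟩ := hgspec q hq
      exact ⟨g q, ⟨h1, hgW⟩, h2⟩
    refine mem_nhdsWithin.mpr ⟨f '' (U ∩ W), hT, hqT, ?_⟩
    rintro q' ⟨⟨u', ⟨hu'U, hu'W⟩, rfl⟩, hq'V⟩
    rw [mem_preimage, hgval u' hu'U]
    exact hu'W
  have hccont : ContinuousOn c (f ⁻¹' V) := by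
    intro y hy
    obtain ⟨i, u, hu, rfl⟩ := (hsrc y).mp hy
    obtain ⟨j, hj1, hj2⟩ := hinv i
    have hN : IsOpen ((M j) ⁻¹' U) := (hcont j).isOpen_preimage U hUo
    have hyN : M i u ∈ (M j) ⁻¹' U := by
      rw [mem_preimage, hj2 u]; exact hu
    have heq : ∀ y' ∈ (M j) ⁻¹' U, c y' = (⟨M i x₀, hMmemF i⟩ : F) := by
      intro y' hy'
      exact Subtype.ext (hcspec y' i (M j y') hy' (hj1 y').symm)
    exact (Filter.EventuallyEq.continuousAt
      (Filter.eventuallyEq_of_mem (hN.mem_nhds hyN) heq)).continuousWithinAt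
  -- the inverse function
  set ifn : Quot R × F → E' := fun p =>
    if h : ∃ i, (p.2 : E') = M i x₀ then M h.choose (g p.1) else x₀ with hifn
  have hinvspec : ∀ (q : Quot R) (z : F) i, (z : E') = M i x₀ →
      ifn (q, z) = M i (g q) := by
    intro q z i hz
    have h : ∃ i', ((q, z).2 : E') = M i' x₀ := ⟨i, hz⟩
    simp only [hifn, dif_pos h]
    exact hsame h.choose i x₀ x₀ hx₀U hx₀U (by rw [← h.choose_spec, hz]) (g q)
  have hfM : ∀ (i : ι) (w : E'), f (M i w) = f w :=
    fun i w => ((key w (M i w)).mpr ⟨i, rfl⟩).symm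
  have hx₀V : f x₀ ∈ V := ⟨x₀, hx₀U, rfl⟩
  haveI := hFdisc
  refine IsEvenlyCovered.to_isEvenlyCovered_preimage (I := F) (.of_trivialization (t :=
  { toFun := fun y => (f y, c y)
    invFun := ifn
    source := f ⁻¹' V
    target := V ×ˢ univ
    map_source' := fun y hy => ⟨hy, mem_univ _⟩
    map_target' := by
      rintro ⟨q, z⟩ ⟨hq, -⟩
      obtain ⟨i, hi⟩ := hFform z z.2
      rw [mem_preimage, hinvspec q z i hi, hfM, (hgspec q hq).2]
      exact hq
    left_inv' := by
      intro y hy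
      obtain ⟨i, u, hu, rfl⟩ := (hsrc y).mp hy
      have hcy : (c (M i u) : E') = M i x₀ := hcspec _ i u hu rfl
      rw [hinvspec _ _ i hcy, hfM, hgval u hu]
    right_inv' := by
      rintro ⟨q, z⟩ ⟨hq, -⟩
      obtain ⟨i, hi⟩ := hFform z z.2
      rw [hinvspec q z i hi]
      refine Prod.ext ?_ ?_
      · show f (M i (g q)) = q
        rw [hfM, (hgspec q hq).2]
      · show c (M i (g q)) = z
        exact Subtype.ext ((hcspec _ i (g q) (hgspec q hq).1 rfl).trans hi.symm)
    open_source := fcont.isOpen_preimage V hVo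
    open_target := hVo.prod isOpen_univ
    continuousOn_toFun := (fcont.continuousOn).prodMk hccont
    continuousOn_invFun := by
      rintro ⟨q, z⟩ hp
      have hq : q ∈ V := hp.1
      obtain ⟨i, hi⟩ := hFform z z.2
      have hNopen : IsOpen ((univ : Set (Quot R)) ×ˢ ({z} : Set F)) :=
        isOpen_univ.prod (isOpen_discrete _)
      have hmem : ((univ : Set (Quot R)) ×ˢ ({z} : Set F)) ∩ (V ×ˢ univ) ∈
          𝓝[(V ×ˢ univ : Set (Quot R × F))] (q, z) :=
        Filter.inter_mem
          (mem_nhdsWithin_of_mem_nhds (hNopen.mem_nhds ⟨mem_univ _, rfl⟩))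
          self_mem_nhdsWithin
      have heq : ∀ p' ∈ ((univ : Set (Quot R)) ×ˢ ({z} : Set F)) ∩ (V ×ˢ univ),
          ifn p' = M i (g p'.1) := by
        rintro ⟨q', z'⟩ ⟨⟨-, hz'⟩, -⟩
        simp only [mem_singleton_iff] at hz'
        exact hinvspec q' z' i (by rw [hz', hi])
      have hcont' : ContinuousWithinAt (fun p' : Quot R × F => M i (g p'.1))
          (V ×ˢ univ) (q, z) :=
        ((hcont i).comp_continuousOn
          (hgcont.comp continuous_fst.continuousOn (fun p' hp' => hp'.1))) _ hp
      refine hcont'.congr_of_eventuallyEq (Filter.eventuallyEq_of_mem hmem heq) ?_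
      exact heq (q, z) ⟨⟨mem_univ _, rfl⟩, hp⟩
    baseSet := V
    open_baseSet := hVo
    source_eq := rfl
    target_eq := rfl
    proj_toFun := fun y _ => rfl }) hx₀V)

end Aux

/-- For a full-rank lattice `L ⊂ ℝ²`, the action of `Γ = L ⋊ {±1}`
(by `(l,ε)·x = εx + l`) on `ℝ² ∖ ½L` is free and properly discontinuous (every point has a
neighborhood `U` with `γU ∩ U = ∅` for all `γ ≠ 1`); consequently the quotient map
`ℝ² ∖ ½L → (ℝ² ∖ ½L)/Γ` is a covering map. -/
theorem stmt_8 (L : AddSubgroup (Fin 2 → ℝ)) (b : Module.Basis (Fin 2) ℝ (Fin 2 → ℝ))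
    (hL : L = AddSubgroup.closure (Set.range ⇑b))
    (halfL : Set (Fin 2 → ℝ)) (hhalf : halfL = {x : Fin 2 → ℝ | x + x ∈ L}) :
    (∀ x ∉ halfL, ∀ l ∈ L, ∀ ε : ℝ, (ε = 1 ∨ ε = -1) →
        ε • x + l = x → (l = 0 ∧ ε = 1)) ∧
    (∀ x ∉ halfL, ∃ U : Set (Fin 2 → ℝ), IsOpen U ∧ x ∈ U ∧ U ⊆ halfLᶜ ∧
      ∀ l ∈ L, ∀ ε : ℝ, (ε = 1 ∨ ε = -1) → ¬(l = 0 ∧ ε = 1) →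
        Disjoint U ((fun y => ε • y + l) '' U)) ∧
    IsCoveringMap (fun x : {x : Fin 2 → ℝ // x ∉ halfL} =>
      Quot.mk (fun p q : {x : Fin 2 → ℝ // x ∉ halfL} =>
        ∃ l ∈ L, ∃ ε : ℝ, (ε = 1 ∨ ε = -1) ∧
          (q : Fin 2 → ℝ) = ε • (p : Fin 2 → ℝ) + l) x) := by
  have hL' : L = (Submodule.span ℤ (Set.range ⇑b)).toAddSubgroup := by
    rw [hL, Submodule.span_int_eq_addSubgroupClosure]
  haveI hdisc : DiscreteTopology L := by rw [hL']; infer_instance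
  have hLclosed : IsClosed (L : Set (Fin 2 → ℝ)) := AddSubgroup.isClosed_of_discrete
  -- minimal norm of nonzero lattice vectors
  have hmin : ∃ m > 0, ∀ l ∈ L, ‖l‖ < m → l = 0 := by
    have h0 : IsOpen ({0} : Set L) := isOpen_discrete _
    rw [isOpen_induced_iff] at h0
    obtain ⟨V, hVo, hV⟩ := h0
    have h0V : (0 : Fin 2 → ℝ) ∈ V := by
      have : (⟨0, L.zero_mem⟩ : L) ∈ (Subtype.val ⁻¹' V : Set L) := by
        rw [hV]; rfl
      exact this
    obtain ⟨m, hm, hball⟩ := Metric.isOpen_iff.mp hVo 0 h0V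
    refine ⟨m, hm, fun l hl hlm => ?_⟩
    have h1 : (⟨l, hl⟩ : L) ∈ (Subtype.val ⁻¹' V : Set L) :=
      hball (by simpa [Metric.mem_ball, dist_zero_right] using hlm)
    rw [hV] at h1
    simpa [Subtype.ext_iff] using h1
  have hhclosed : IsClosed halfL := by
    rw [hhalf]
    exact IsClosed.preimage (continuous_id.add continuous_id) hLclosed
  -- Part 1 : freeness
  have part1 : ∀ x ∉ halfL, ∀ l ∈ L, ∀ ε : ℝ, (ε = 1 ∨ ε = -1) →
      ε • x + l = x → (l = 0 ∧ ε = 1) := by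
    intro x hx l hl ε hε heq
    rcases hε with rfl | rfl
    · refine ⟨?_, rfl⟩
      have h1 : x + l = x + 0 := by simpa using heq
      exact add_left_cancel h1
    · exfalso
      apply hx
      rw [hhalf]
      have h1 : -x + l = x := by simpa [neg_smul] using heq
      have h2 : l = x + x := by
        have := congrArg (fun z => x + z) h1
        simpa [add_neg_cancel_left, ← add_assoc] using this
      show x + x ∈ L
      rw [← h2]; exact hl
  obtain ⟨m, hm0, hminv⟩ := hmin
  -- Part 2 : proper discontinuity
  have part2 : ∀ x ∉ halfL, ∃ U : Set (Fin 2 → ℝ), IsOpen U ∧ x ∈ U ∧ U ⊆ halfLᶜ ∧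
      ∀ l ∈ L, ∀ ε : ℝ, (ε = 1 ∨ ε = -1) → ¬(l = 0 ∧ ε = 1) →
        Disjoint U ((fun y => ε • y + l) '' U) := by
    intro x hx
    obtain ⟨e1, he1, hball1⟩ := Metric.isOpen_iff.mp hhclosed.isOpen_compl x hx
    have hxx : x + x ∈ (L : Set (Fin 2 → ℝ))ᶜ := by
      intro h; exact hx (by rw [hhalf]; exact h)
    obtain ⟨δ, hδ, hballδ⟩ := Metric.isOpen_iff.mp hLclosed.isOpen_compl (x + x) hxx
    set r := min (min e1 (m / 2)) (δ / 2) with hr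
    have hr0 : 0 < r := by positivity
    refine ⟨Metric.ball x r, Metric.isOpen_ball, Metric.mem_ball_self hr0, ?_, ?_⟩
    · intro y hy
      exact hball1 (Metric.mem_ball.mpr (lt_of_lt_of_le (Metric.mem_ball.mp hy)
        (le_trans (min_le_left _ _) (min_le_left _ _))))
    · intro l hl ε hε hne
      rw [Set.disjoint_left]
      rintro y hy ⟨u, hu, huy⟩
      have hdy : dist y x < r := Metric.mem_ball.mp hy
      have hdu : dist u x < r := Metric.mem_ball.mp hu
      rcases hε with rfl | rfl
      · apply hne
        refine ⟨?_, rfl⟩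
        apply hminv l hl
        have hly : l = y - u := by
          have : y = u + l := by simpa using huy.symm
          rw [this]; abel
        rw [hly]
        calc ‖y - u‖ = ‖(y - x) + (x - u)‖ := by rw [sub_add_sub_cancel]
        _ ≤ ‖y - x‖ + ‖x - u‖ := norm_add_le _ _
        _ = dist y x + dist u x := by
            rw [dist_eq_norm, dist_eq_norm, norm_sub_rev x u]
        _ < r + r := by linarith
        _ ≤ m := by
          have : r ≤ m / 2 := le_trans (min_le_left _ _) (min_le_right _ _)
          linarith
      · have hly : l = y + u := by
          have : y = -u + l := by simpa [neg_smul] using huy.symm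
          rw [this]; abel
        have hd : dist l (x + x) < δ := by
          rw [dist_eq_norm]
          have h1 : l - (x + x) = (y - x) + (u - x) := by rw [hly]; abel
          rw [h1]
          calc ‖(y - x) + (u - x)‖ ≤ ‖y - x‖ + ‖u - x‖ := norm_add_le _ _
          _ = dist y x + dist u x := by rw [dist_eq_norm, dist_eq_norm]
          _ < r + r := by linarith
          _ ≤ δ := by
            have : r ≤ δ / 2 := min_le_right _ _
            linarith
        exact hballδ (Metric.mem_ball.mpr hd) hl
  refine ⟨part1, part2, ?_⟩
  -- Part 3 : covering map
  -- invariance of the complement of halfL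
  have hmapmem : ∀ (l : Fin 2 → ℝ), l ∈ L → ∀ (ε : ℝ), (ε = 1 ∨ ε = -1) →
      ∀ x : Fin 2 → ℝ, x ∉ halfL → ε • x + l ∉ halfL := by
    intro l hl ε hε x hx hmem
    apply hx
    rw [hhalf] at hmem ⊢
    simp only [Set.mem_setOf_eq] at hmem ⊢
    have h2l : l + l ∈ L := L.add_mem hl hl
    have h1 : (ε • x + l) + (ε • x + l) = ε • (x + x) + (l + l) := by
      rw [smul_add]; abel
    rw [h1] at hmem
    have h3 : ε • (x + x) ∈ L := by
      have := L.sub_mem hmem h2l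
      simpa using this
    rcases hε with rfl | rfl
    · simpa using h3
    · have := L.neg_mem h3
      simpa [neg_smul] using this
  set E' := {x : Fin 2 → ℝ // x ∉ halfL} with hE'
  set ι := {p : (Fin 2 → ℝ) × ℝ // p.1 ∈ L ∧ (p.2 = 1 ∨ p.2 = -1)} with hι
  set M : ι → E' → E' := fun i y =>
    ⟨i.1.2 • (y : Fin 2 → ℝ) + i.1.1, hmapmem i.1.1 i.2.1 i.1.2 i.2.2 _ y.2⟩ with hM
  have hrel : (fun p q : E' => ∃ l ∈ L, ∃ ε : ℝ, (ε = 1 ∨ ε = -1) ∧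
      (q : Fin 2 → ℝ) = ε • (p : Fin 2 → ℝ) + l) = (fun p q : E' => ∃ i : ι, q = M i p) := by
    funext p q
    apply propext
    constructor
    · rintro ⟨l, hl, ε, hε, heq⟩
      exact ⟨⟨(l, ε), ⟨hl, hε⟩⟩, Subtype.ext heq⟩
    · rintro ⟨⟨⟨l, ε⟩, ⟨hl, hε⟩⟩, heq⟩
      exact ⟨l, hl, ε, hε, congrArg Subtype.val heq⟩
  rw [hrel]
  apply aux_covering M
  · intro i
    exact ((continuous_subtype_val.const_smul i.1.2).add continuous_const).subtype_mk _
  · intro i j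
    obtain ⟨⟨l, ε⟩, hl, hε⟩ := i
    obtain ⟨⟨l', ε'⟩, hl', hε'⟩ := j
    have hmem : ε • l' + l ∈ L := by
      refine L.add_mem ?_ hl
      rcases hε with rfl | rfl
      · simpa using hl'
      · simpa [neg_smul] using L.neg_mem hl'
    have hor : ε * ε' = 1 ∨ ε * ε' = -1 := by
      rcases hε with rfl | rfl <;> rcases hε' with rfl | rfl <;> norm_num
    refine ⟨⟨(ε • l' + l, ε * ε'), ⟨hmem, hor⟩⟩, fun y => ?_⟩
    apply Subtype.ext
    show ε • (ε' • (y : Fin 2 → ℝ) + l') + l = (ε * ε') • (y : Fin 2 → ℝ) + (ε • l' + l)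
    rw [smul_add, smul_smul]; abel
  · intro i
    obtain ⟨⟨l, ε⟩, hl, hε⟩ := i
    have hmem : -(ε • l) ∈ L := by
      refine L.neg_mem ?_
      rcases hε with rfl | rfl
      · simpa using hl
      · simpa [neg_smul] using L.neg_mem hl
    have hε2 : ε * ε = 1 := by rcases hε with rfl | rfl <;> norm_num
    refine ⟨⟨(-(ε • l), ε), ⟨hmem, hε⟩⟩, fun y => ?_, fun y => ?_⟩
    · apply Subtype.ext
      show ε • (ε • (y : Fin 2 → ℝ) + -(ε • l)) + l = (y : Fin 2 → ℝ)
      rw [smul_add, smul_smul, hε2, one_smul, smul_neg, smul_smul, hε2, one_smul]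
      abel
    · apply Subtype.ext
      show ε • (ε • (y : Fin 2 → ℝ) + l) + -(ε • l) = (y : Fin 2 → ℝ)
      rw [smul_add, smul_smul, hε2, one_smul]
      abel
  · refine ⟨⟨(0, 1), ⟨L.zero_mem, Or.inl rfl⟩⟩, fun y => ?_⟩
    apply Subtype.ext
    show (1 : ℝ) • (y : Fin 2 → ℝ) + 0 = y
    simp
  · intro x
    obtain ⟨U₀, hU₀o, hxU₀, hU₀c, hU₀d⟩ := part2 (x : Fin 2 → ℝ) x.2
    refine ⟨Subtype.val ⁻¹' U₀, hU₀o.preimage continuous_subtype_val, hxU₀, ?_⟩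
    rintro ⟨⟨l, ε⟩, hl, hε⟩ u hu hMu y
    by_cases h : l = 0 ∧ ε = 1
    · obtain ⟨rfl, rfl⟩ := h
      apply Subtype.ext
      show (1 : ℝ) • (y : Fin 2 → ℝ) + 0 = y
      simp
    · exfalso
      have hdisj := hU₀d l hl ε hε h
      exact Set.disjoint_left.mp hdisj hMu ⟨u, hu, rfl⟩
end

section
/- Let Γ = L ⋊ H act on ℝ^d with L ⊂ ℝ^d a full-rank lattice acting by translations and H a finite subgroup of GL(d, ℤ) (preserving L). If Σ̄ is a Γ-invariant locally finite polyhedral decomposition of ℝ^d such that for each cell σ̄ and each γ ∈ Γ ∖ {1} not fixing σ̄ pointwise we have Star(σ̄) ∩ γ·Star(σ̄) = ∅ whenever γ has no fixed points in Star(σ̄), then the restriction of the quotient map ℝ^d → ℝ^d/Γ to the union of open stars of cells avoiding the fixed locus of Γ is a covering map onto its image. -/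
open Set Topology

/-- Index type for the group `Γ = L ⋊ H`, given the discrete topology. -/
def GIdx (d : ℕ) (L : AddSubgroup (Fin d → ℝ))
    (Hs : Set ((Fin d → ℝ) ≃ₗ[ℝ] (Fin d → ℝ))) : Type :=
  {p : (Fin d → ℝ) × ((Fin d → ℝ) ≃ₗ[ℝ] (Fin d → ℝ)) // p.1 ∈ L ∧ p.2 ∈ Hs}

instance (d : ℕ) (L : AddSubgroup (Fin d → ℝ))
    (Hs : Set ((Fin d → ℝ) ≃ₗ[ℝ] (Fin d → ℝ))) : TopologicalSpace (GIdx d L Hs) := ⊥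

instance (d : ℕ) (L : AddSubgroup (Fin d → ℝ))
    (Hs : Set ((Fin d → ℝ) ≃ₗ[ℝ] (Fin d → ℝ))) : DiscreteTopology (GIdx d L Hs) := ⟨rfl⟩

open Classical in
/-- Choice-based section of the quotient map over the image of `U`. -/
noncomputable def psiF {α : Type*} (U : Set α) (r : α → α → Prop) (x₀ : α) (b : Quot r) : α :=
  if hb : ∃ u, u ∈ U ∧ Quot.mk r u = b then hb.choose else x₀

theorem psiF_memU {α : Type*} {U : Set α} {r : α → α → Prop} {x₀ : α} (hx₀ : x₀ ∈ U)
    (b : Quot r) : psiF U r x₀ b ∈ U := by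
  unfold psiF
  by_cases hb : ∃ u, u ∈ U ∧ Quot.mk r u = b
  · rw [dif_pos hb]; exact hb.choose_spec.1
  · rw [dif_neg hb]; exact hx₀

theorem psiF_eq {α : Type*} {U : Set α} {r : α → α → Prop} {x₀ : α} (b : Quot r)
    (hb : ∃ u, u ∈ U ∧ Quot.mk r u = b) : Quot.mk r (psiF U r x₀ b) = b := by
  rw [psiF, dif_pos hb]; exact hb.choose_spec.2

open Classical in
/-- Choice-based selection of the sheet containing a point. -/
noncomputable def gF {α I : Type*} (img : I → Set α) (p₀ : I) (x : α) : I :=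
  if hx : ∃ p, x ∈ img p then hx.choose else p₀

theorem gF_mem {α I : Type*} {img : I → Set α} {p₀ : I} {x : α} (hx : ∃ p, x ∈ img p) :
    x ∈ img (gF img p₀ x) := by
  rw [gF, dif_pos hx]; exact hx.choose_spec

theorem stmt16_aux (d : ℕ) (L : AddSubgroup (Fin d → ℝ))
    (Hs : Set ((Fin d → ℝ) ≃ₗ[ℝ] (Fin d → ℝ)))
    (hHone : 1 ∈ Hs) (hHmul : ∀ h ∈ Hs, ∀ h' ∈ Hs, h * h' ∈ Hs)
    (hHinv : ∀ h ∈ Hs, h⁻¹ ∈ Hs)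
    (hHL : ∀ h ∈ Hs, ∀ x ∈ L, h x ∈ L)
    (act : (Fin d → ℝ) → ((Fin d → ℝ) ≃ₗ[ℝ] (Fin d → ℝ)) → (Fin d → ℝ) → (Fin d → ℝ))
    (hact : ∀ l h x, act l h x = h x + l)
    (r : (Fin d → ℝ) → (Fin d → ℝ) → Prop)
    (hr : r = fun x y => ∃ l ∈ L, ∃ h ∈ Hs, y = act l h x)
    (U W : Set (Fin d → ℝ)) (hUopen : IsOpen U)
    (hUsub : ∀ l ∈ L, ∀ h ∈ Hs, act l h '' U ⊆ W)
    (hUdisj : ∀ l ∈ L, ∀ h ∈ Hs, ¬(l = 0 ∧ h = 1) → Disjoint U (act l h '' U))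
    (x₀ : Fin d → ℝ) (hx₀U : x₀ ∈ U)
    (b₀ : (Quot.mk r '' W : Set (Quot r))) (hb₀ : (b₀ : Quot r) = Quot.mk r x₀) :
    IsEvenlyCovered (fun x : W =>
      (⟨Quot.mk r ↑x, ⟨↑x, x.2, rfl⟩⟩ : (Quot.mk r '' W : Set (Quot r)))) b₀
      ((fun x : W =>
      (⟨Quot.mk r ↑x, ⟨↑x, x.2, rfl⟩⟩ : (Quot.mk r '' W : Set (Quot r)))) ⁻¹' {b₀}) := by
  classical
  have hrel : ∀ x y, r x y ↔ ∃ l ∈ L, ∃ h ∈ Hs, y = act l h x := fun x y => by rw [hr]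
  have hmulapply : ∀ (h h' : (Fin d → ℝ) ≃ₗ[ℝ] (Fin d → ℝ)) x, (h * h') x = h (h' x) :=
    fun _ _ _ => rfl
  have hid : ∀ x, act 0 1 x = x := by
    intro x; rw [hact]; exact add_zero x
  have actcomp : ∀ l h l' h' (x : Fin d → ℝ),
      act l' h' (act l h x) = act (h' l + l') (h' * h) x := by
    intro l h l' h' x
    rw [hact, hact, hact, hmulapply, map_add, add_assoc]
  have requiv : Equivalence r := by
    refine ⟨?_, ?_, ?_⟩
    · intro x; exact (hrel x x).2 ⟨0, zero_mem _, 1, hHone, (hid x).symm⟩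
    · intro x y hxy
      obtain ⟨l, hl, h, hh, rfl⟩ := (hrel x y).1 hxy
      refine (hrel _ _).2 ⟨-(h⁻¹ l), neg_mem (hHL h⁻¹ (hHinv h hh) l hl), h⁻¹, hHinv h hh, ?_⟩
      rw [actcomp, add_neg_cancel, inv_mul_cancel, hid]
    · intro x y z hxy hyz
      obtain ⟨l, hl, h, hh, rfl⟩ := (hrel x y).1 hxy
      obtain ⟨l', hl', h', hh', rfl⟩ := (hrel _ _).1 hyz
      exact (hrel _ _).2 ⟨h' l + l', add_mem (hHL h' hh' l hl) hl', h' * h,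
        hHmul h' hh' h hh, (actcomp l h l' h' x)⟩
  have qeq : ∀ x y, Quot.mk r x = Quot.mk r y ↔ r x y := fun x y => by
    rw [Quot.eq, requiv.eqvGen_iff]
  have hcontA : ∀ l h, Continuous (act l h) := by
    intro l h
    have he : act l h = fun x => h.toContinuousLinearEquiv x + l := by
      funext x; rw [hact]; rfl
    rw [he]; exact h.toContinuousLinearEquiv.continuous.add continuous_const
  have hopenmapA : ∀ l h, IsOpenMap (act l h) := by
    intro l h
    have he : act l h =
        (⇑(Homeomorph.addRight l)) ∘ ⇑(h.toContinuousLinearEquiv.toHomeomorph) := by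
      funext x; rw [hact]; rfl
    rw [he]
    exact (Homeomorph.addRight l).isOpenMap.comp h.toContinuousLinearEquiv.toHomeomorph.isOpenMap
  have hqinv : ∀ l ∈ L, ∀ h ∈ Hs, ∀ x, Quot.mk r (act l h x) = Quot.mk r x := by
    intro l hl h hh x
    exact ((qeq x (act l h x)).2 ((hrel _ _).2 ⟨l, hl, h, hh, rfl⟩)).symm
  have hqopenmap : IsOpenMap (Quot.mk r) := by
    intro O hO
    rw [← isQuotientMap_quot_mk.isOpen_preimage]
    have he : (Quot.mk r) ⁻¹' (Quot.mk r '' O) = ⋃ l ∈ L, ⋃ h ∈ Hs, act l h '' O := by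
      ext x
      simp only [mem_preimage, mem_image, mem_iUnion]
      constructor
      · rintro ⟨o, hoO, ho⟩
        obtain ⟨l, hl, h, hh, rfl⟩ := (hrel o x).1 ((qeq o x).1 ho)
        exact ⟨l, hl, h, hh, o, hoO, rfl⟩
      · rintro ⟨l, hl, h, hh, o, hoO, rfl⟩
        exact ⟨o, hoO, (hqinv l hl h hh o).symm⟩
    rw [he]
    exact isOpen_biUnion fun l _ => isOpen_biUnion fun h _ => hopenmapA l h O hO
  have hUW : U ⊆ W := by
    intro u hu
    exact hUsub 0 (zero_mem _) 1 hHone ⟨u, hu, hid u⟩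
  -- key injectivity lemma
  have key : ∀ l ∈ L, ∀ h ∈ Hs, ∀ l' ∈ L, ∀ h' ∈ Hs, ∀ u ∈ U, ∀ u' ∈ U,
      act l h u = act l' h' u' → l = l' ∧ h = h' ∧ u = u' := by
    intro l hl h hh l' hl' h' hh' u hu u' hu' heq
    have heq' : h u + l = h' u' + l' := by rw [← hact, ← hact, heq]
    have e1 : act (h'⁻¹ (l - l')) (h'⁻¹ * h) u = u' := by
      apply h'.injective
      rw [hact, hmulapply, map_add]
      have h2 : ∀ y, h' (h'⁻¹ y) = y := fun y => h'.apply_symm_apply y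
      rw [h2, h2]
      have h3 : h u = h' u' + l' - l := eq_sub_of_add_eq heq'
      rw [h3]; abel
    by_cases hc : h'⁻¹ (l - l') = 0 ∧ h'⁻¹ * h = 1
    · have hhh : h = h' := (inv_mul_eq_one.mp hc.2).symm
      have hll : l = l' := by
        have h4 : l - l' = 0 := by
          have := hc.1
          have h5 : h'⁻¹ (l - l') = h'⁻¹ 0 := by rw [this, map_zero]
          exact h'⁻¹.injective h5
        exact sub_eq_zero.mp h4
      refine ⟨hll, hhh, ?_⟩
      rw [hc.1, hc.2, hid] at e1
      exact e1
    · exfalso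
      have hdis := hUdisj (h'⁻¹ (l - l')) (hHL h'⁻¹ (hHinv h' hh') _ (sub_mem hl hl'))
        (h'⁻¹ * h) (hHmul h'⁻¹ (hHinv h' hh') h hh) hc
      exact Set.disjoint_left.mp hdis hu' ⟨u, hu, e1⟩
  -- the index type and the sheets
  set img : GIdx d L Hs → Set (Fin d → ℝ) := fun p => act p.1.1 p.1.2 '' U with himg
  have imgsubW : ∀ p, img p ⊆ W := fun p => hUsub p.1.1 p.2.1 p.1.2 p.2.2
  have imgopen : ∀ p, IsOpen (img p) := fun p => hopenmapA p.1.1 p.1.2 U hUopen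
  have imguniq : ∀ (x : Fin d → ℝ) (p p' : GIdx d L Hs), x ∈ img p → x ∈ img p' → p = p' := by
    rintro x p p' ⟨u, hu, hxe⟩ ⟨u', hu', hx'e⟩
    obtain ⟨e1, e2, _⟩ := key p.1.1 p.2.1 p.1.2 p.2.2 p'.1.1 p'.2.1 p'.1.2 p'.2.2 u hu u' hu'
      (hxe.trans hx'e.symm)
    exact Subtype.ext (Prod.ext e1 e2)
  set p₀ : GIdx d L Hs := ⟨(0, 1), zero_mem _, hHone⟩ with hp₀
  set B : Set (Quot r) := Quot.mk r '' U with hB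
  have hBopen : IsOpen B := hqopenmap U hUopen
  have hb₀B : (b₀ : Quot r) ∈ B := by rw [hb₀]; exact ⟨x₀, hx₀U, rfl⟩
  have hψU : ∀ b : Quot r, psiF U r x₀ b ∈ U := psiF_memU hx₀U
  have hψq : ∀ b ∈ B, Quot.mk r (psiF U r x₀ b) = b := by
    rintro b ⟨u, hu, he⟩
    exact psiF_eq b ⟨u, hu, he⟩
  have hψuniq : ∀ (b : Quot r) (u : Fin d → ℝ), u ∈ U → Quot.mk r u = b →
      psiF U r x₀ b = u := by
    intro b u hu hqu
    have h1 : Quot.mk r (psiF U r x₀ b) = Quot.mk r u :=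
      (psiF_eq b ⟨u, hu, hqu⟩).trans hqu.symm
    obtain ⟨l, hl, h, hh, he⟩ := (hrel _ _).1 ((qeq _ _).1 h1)
    have := key l hl h hh 0 (zero_mem _) 1 hHone (psiF U r x₀ b) (hψU b) u hu
      (by rw [hid]; exact he.symm)
    exact this.2.2
  have srcChar : ∀ x : W, Quot.mk r ↑x ∈ B ↔ ∃ p, (x : Fin d → ℝ) ∈ img p := by
    intro x
    constructor
    · rintro ⟨u, hu, he⟩
      obtain ⟨l, hl, h, hh, hx⟩ := (hrel _ _).1 ((qeq _ _).1 he)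
      exact ⟨⟨(l, h), hl, hh⟩, ⟨u, hu, hx.symm⟩⟩
    · rintro ⟨p, u, hu, he⟩
      rw [← he, hqinv p.1.1 p.2.1 p.1.2 p.2.2]
      exact ⟨u, hu, rfl⟩
  refine IsEvenlyCovered.to_isEvenlyCovered_preimage (I := GIdx d L Hs) ?_
  refine (fun h : ∃ t : Bundle.Trivialization (GIdx d L Hs) _, b₀ ∈ t.baseSet =>
    IsEvenlyCovered.of_trivialization h.choose_spec) ?_
  -- continuity facts
  have fcont : Continuous (fun x : W =>
      (⟨Quot.mk r ↑x, ⟨↑x, x.2, rfl⟩⟩ : (Quot.mk r '' W : Set (Quot r)))) :=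
    Continuous.subtype_mk (continuous_quot_mk.comp continuous_subtype_val) _
  have gcontOn : ContinuousOn (fun x : W => gF img p₀ ↑x)
      {x : W | Quot.mk r ↑x ∈ B} := by
    apply continuousOn_of_forall_continuousAt
    intro x hx
    have hp : (x : Fin d → ℝ) ∈ img (gF img p₀ ↑x) := gF_mem ((srcChar x).1 hx)
    have hN : (Subtype.val ⁻¹' img (gF img p₀ ↑x) : Set W) ∈ 𝓝 x :=
      (((imgopen _).preimage continuous_subtype_val)).mem_nhds hp
    refine Filter.EventuallyEq.continuousAt (y := gF img p₀ ↑x) ?_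
    exact Filter.eventually_of_mem hN fun y hy =>
      imguniq ↑y _ _ (gF_mem ⟨_, hy⟩) hy
  have ψcontOn : ContinuousOn (fun b : (Quot.mk r '' W : Set (Quot r)) => psiF U r x₀ ↑b)
      (Subtype.val ⁻¹' B) := by
    apply continuousOn_of_forall_continuousAt
    intro b hb
    rw [ContinuousAt, tendsto_nhds]
    intro O hOopen hψbO
    have hNopen : IsOpen (Subtype.val ⁻¹' (Quot.mk r '' (O ∩ U)) :
        Set (Quot.mk r '' W : Set (Quot r))) :=
      (hqopenmap _ (hOopen.inter hUopen)).preimage continuous_subtype_val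
    have hbN : b ∈ Subtype.val ⁻¹' (Quot.mk r '' (O ∩ U)) :=
      ⟨psiF U r x₀ ↑b, ⟨hψbO, hψU _⟩, hψq ↑b hb⟩
    refine Filter.mem_of_superset (hNopen.mem_nhds hbN) ?_
    rintro c ⟨o, ⟨hoO, hoU⟩, he⟩
    show psiF U r x₀ ↑c ∈ O
    rw [hψuniq ↑c o hoU he]
    exact hoO
  refine ⟨{
      toFun := fun x => (⟨Quot.mk r ↑x, ⟨↑x, x.2, rfl⟩⟩, gF img p₀ ↑x),
      invFun := fun z => ⟨act z.2.1.1 z.2.1.2 (psiF U r x₀ ↑z.1),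
        imgsubW z.2 ⟨psiF U r x₀ ↑z.1, hψU _, rfl⟩⟩,
      source := {x : W | Quot.mk r ↑x ∈ B},
      target := (Subtype.val ⁻¹' B) ×ˢ (univ : Set (GIdx d L Hs)),
      map_source' := fun x hx => ⟨hx, trivial⟩,
      map_target' := ?_,
      left_inv' := ?_,
      right_inv' := ?_,
      open_source := hBopen.preimage (continuous_quot_mk.comp continuous_subtype_val),
      open_target := ((hBopen.preimage continuous_subtype_val).prod isOpen_univ),
      continuousOn_toFun := fcont.continuousOn.prodMk gcontOn,
      continuousOn_invFun := ?_,
      baseSet := Subtype.val ⁻¹' B,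
      open_baseSet := hBopen.preimage continuous_subtype_val,
      source_eq := rfl,
      target_eq := rfl,
      proj_toFun := fun _ _ => rfl }, hb₀B⟩
  · -- map_target'
    rintro ⟨b, p⟩ ⟨hb, -⟩
    show Quot.mk r (act p.1.1 p.1.2 (psiF U r x₀ ↑b)) ∈ B
    rw [hqinv p.1.1 p.2.1 p.1.2 p.2.2, hψq ↑b hb]
    exact hb
  · -- left_inv'
    intro x hx
    obtain ⟨p, hp⟩ := (srcChar x).1 hx
    have hgx : (x : Fin d → ℝ) ∈ img (gF img p₀ ↑x) := gF_mem ⟨p, hp⟩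
    obtain ⟨u, hu, he⟩ := hgx
    have hq1 : Quot.mk r u = Quot.mk r ↑x := by
      rw [← he, hqinv (gF img p₀ ↑x).1.1 (gF img p₀ ↑x).2.1
        (gF img p₀ ↑x).1.2 (gF img p₀ ↑x).2.2]
    apply Subtype.ext
    show act (gF img p₀ ↑x).1.1 (gF img p₀ ↑x).1.2 (psiF U r x₀ (Quot.mk r ↑x)) = ↑x
    rw [hψuniq (Quot.mk r ↑x) u hu hq1, he]
  · -- right_inv'
    rintro ⟨b, p⟩ ⟨hb, -⟩
    have hψb := hψq ↑b hb
    refine Prod.ext ?_ ?_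
    · apply Subtype.ext
      show Quot.mk r (act p.1.1 p.1.2 (psiF U r x₀ ↑b)) = ↑b
      rw [hqinv p.1.1 p.2.1 p.1.2 p.2.2, hψb]
    · show gF img p₀ (act p.1.1 p.1.2 (psiF U r x₀ ↑b)) = p
      have hmem : act p.1.1 p.1.2 (psiF U r x₀ ↑b) ∈ img p := ⟨_, hψU _, rfl⟩
      exact imguniq _ _ _ (gF_mem ⟨p, hmem⟩) hmem
  · -- continuousOn_invFun
    have slice : ∀ q : GIdx d L Hs, ContinuousOn
        (fun b : (Quot.mk r '' W : Set (Quot r)) =>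
          (⟨act q.1.1 q.1.2 (psiF U r x₀ ↑b),
            imgsubW q ⟨psiF U r x₀ ↑b, hψU _, rfl⟩⟩ : W))
        (Subtype.val ⁻¹' B) := by
      intro q
      rw [Topology.IsInducing.subtypeVal.continuousOn_iff]
      exact (hcontA q.1.1 q.1.2).comp_continuousOn ψcontOn
    intro z hz
    have hV : ((univ : Set (Quot.mk r '' W : Set (Quot r))) ×ˢ ({z.2} : Set (GIdx d L Hs)))
        ∈ 𝓝 z := (isOpen_univ.prod (isOpen_discrete _)).mem_nhds ⟨trivial, rfl⟩
    rw [← continuousWithinAt_inter hV]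
    have hc : ContinuousWithinAt
        (fun w : (Quot.mk r '' W : Set (Quot r)) × GIdx d L Hs =>
          (⟨act z.2.1.1 z.2.1.2 (psiF U r x₀ ↑w.1),
            imgsubW z.2 ⟨psiF U r x₀ ↑w.1, hψU _, rfl⟩⟩ : W))
        ((Subtype.val ⁻¹' B) ×ˢ (univ : Set (GIdx d L Hs)) ∩
          (univ : Set _) ×ˢ ({z.2} : Set (GIdx d L Hs))) z :=
      ((slice z.2) z.1 hz.1).comp continuousWithinAt_fst fun w hw => hw.1.1
    refine hc.congr ?_ ?_
    · rintro w ⟨-, -, hw2⟩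
      have hw2' : w.2 = z.2 := hw2
      show (⟨act w.2.1.1 w.2.1.2 (psiF U r x₀ ↑w.1), _⟩ : W) = _
      apply Subtype.ext
      show act w.2.1.1 w.2.1.2 (psiF U r x₀ ↑w.1) = act z.2.1.1 z.2.1.2 (psiF U r x₀ ↑w.1)
      rw [hw2']
    · rfl

/-- Let `Γ = L ⋊ H` act on `ℝ^d`, with `L` a full-rank lattice acting by
translations and `H` a finite group of linear automorphisms preserving `L`; the action of
`γ = (l,h)` is `x ↦ h(x) + l`. Given a `Γ`-invariant family of open stars of cells such
that each good star avoids the fixed locus `F` and satisfies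
`Star(σ̄) ∩ γ·Star(σ̄) = ∅` for all `γ ≠ 1`, the restriction of the quotient map
`ℝ^d → ℝ^d/Γ` to the union `W` of the good stars is a covering map onto its image. -/
theorem stmt_16 (d : ℕ) (L : AddSubgroup (Fin d → ℝ))
    (bL : Module.Basis (Fin d) ℝ (Fin d → ℝ))
    (hL : L = AddSubgroup.closure (Set.range ⇑bL))
    (Hs : Set ((Fin d → ℝ) ≃ₗ[ℝ] (Fin d → ℝ))) (hHfin : Hs.Finite)
    (hHone : 1 ∈ Hs) (hHmul : ∀ h ∈ Hs, ∀ h' ∈ Hs, h * h' ∈ Hs)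
    (hHinv : ∀ h ∈ Hs, h⁻¹ ∈ Hs)
    (hHL : ∀ h ∈ Hs, ∀ x ∈ L, h x ∈ L)
    (act : (Fin d → ℝ) → ((Fin d → ℝ) ≃ₗ[ℝ] (Fin d → ℝ)) → (Fin d → ℝ) → (Fin d → ℝ))
    (hact : ∀ l h x, act l h x = h x + l)
    (F : Set (Fin d → ℝ))
    (hF : F = {x | ∃ l ∈ L, ∃ h ∈ Hs, ¬(l = 0 ∧ h = 1) ∧ act l h x = x})
    (ι : Type*) (Star : ι → Set (Fin d → ℝ)) (hopen : ∀ i, IsOpen (Star i))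
    (J : Set ι) (havoid : ∀ i ∈ J, Disjoint (Star i) F)
    (hinvariant : ∀ l ∈ L, ∀ h ∈ Hs, ∀ i ∈ J, ∃ j ∈ J, act l h '' Star i = Star j)
    (hdisj : ∀ i ∈ J, ∀ l ∈ L, ∀ h ∈ Hs, ¬(l = 0 ∧ h = 1) →
      Disjoint (Star i) (act l h '' Star i))
    (W : Set (Fin d → ℝ)) (hW : W = ⋃ i ∈ J, Star i)
    (r : (Fin d → ℝ) → (Fin d → ℝ) → Prop)
    (hr : r = fun x y => ∃ l ∈ L, ∃ h ∈ Hs, y = act l h x) :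
    IsCoveringMap (fun x : W =>
      (⟨Quot.mk r ↑x, ⟨↑x, x.2, rfl⟩⟩ : (Quot.mk r '' W : Set (Quot r)))) := by
  intro b₀
  obtain ⟨x₀, hx₀W, hq⟩ := b₀.2
  have hx₀W' := hx₀W
  rw [hW] at hx₀W'
  simp only [mem_iUnion] at hx₀W'
  obtain ⟨i, hiJ, hx₀U⟩ := hx₀W'
  have hUsub : ∀ l ∈ L, ∀ h ∈ Hs, act l h '' Star i ⊆ W := by
    intro l hl h hh
    obtain ⟨j, hjJ, he⟩ := hinvariant l hl h hh i hiJ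
    rw [he, hW]
    exact subset_biUnion_of_mem hjJ
  exact stmt16_aux d L Hs hHone hHmul hHinv hHL act hact r hr (Star i) W (hopen i)
    hUsub (hdisj i hiJ) x₀ hx₀U b₀ hq.symm
end
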